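/- (Erdős–Szekeres cups-caps theorem) For all integers m, n ≥ 3, every finite set P ⊆ ℝ² with pairwise distinct x-coordinates, no 3 collinear points, and |P| ≥ binom(m+n−4, n−2) + 1 contains an m-cup or an n-cap. -/
import Mathlib


open Finset

noncomputable section

abbrev Pt : Type := ℝ × ℝ

/-- `P` contains `l` collinear points. -/
def HasCollinear (l : ℕ) (P : Finset Pt) : Prop :=
  ∃ S : Finset Pt, S ⊆ P ∧ S.card = l ∧ Collinear ℝ (S : Set Pt)

/-- `X` is in convex position: no point of `X` lies in the convex hull of the others. -/
def ConvexPos (X : Finset Pt) : Prop :=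
  ∀ x ∈ X, x ∉ convexHull ℝ ((X.erase x : Finset Pt) : Set Pt)

/-- `p 0, …, p (k-1)` have strictly increasing x-coordinates and each `p (i+1)` lies
strictly below the line through `p i` and `p (i+2)` (a `k`-cup). -/
def IsCupSeq {k : ℕ} (p : Fin k → Pt) : Prop :=
  (∀ i j : Fin k, i < j → (p i).1 < (p j).1) ∧
  ∀ i : ℕ, ∀ h : i + 2 < k,
    ((p ⟨i + 1, by omega⟩).2 - (p ⟨i, by omega⟩).2) * ((p ⟨i + 2, h⟩).1 - (p ⟨i, by omega⟩).1)
      < ((p ⟨i + 2, h⟩).2 - (p ⟨i, by omega⟩).2) * ((p ⟨i + 1, by omega⟩).1 - (p ⟨i, by omega⟩).1)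

/-- `p 0, …, p (k-1)` have strictly increasing x-coordinates and each `p (i+1)` lies
strictly above the line through `p i` and `p (i+2)` (a `k`-cap). -/
def IsCapSeq {k : ℕ} (p : Fin k → Pt) : Prop :=
  (∀ i j : Fin k, i < j → (p i).1 < (p j).1) ∧
  ∀ i : ℕ, ∀ h : i + 2 < k,
    ((p ⟨i + 1, by omega⟩).2 - (p ⟨i, by omega⟩).2) * ((p ⟨i + 2, h⟩).1 - (p ⟨i, by omega⟩).1)
      > ((p ⟨i + 2, h⟩).2 - (p ⟨i, by omega⟩).2) * ((p ⟨i + 1, by omega⟩).1 - (p ⟨i, by omega⟩).1)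

/-- `P` contains a `k`-cup. -/
def HasCup (k : ℕ) (P : Finset Pt) : Prop :=
  ∃ p : Fin k → Pt, (∀ i, p i ∈ P) ∧ IsCupSeq p

/-- `P` contains a `k`-cap. -/
def HasCap (k : ℕ) (P : Finset Pt) : Prop :=
  ∃ p : Fin k → Pt, (∀ i, p i ∈ P) ∧ IsCapSeq p

/-- The points of `P` have pairwise distinct x-coordinates. -/
def DistinctX (P : Finset Pt) : Prop :=
  Set.InjOn Prod.fst (P : Set Pt)

/-- There is an affine line (given by the equation `a*x + b*y = c`) strictly
separating `A` from `B`. -/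
def SepLine (A B : Set Pt) : Prop :=
  ∃ a b c : ℝ, (a, b) ≠ ((0 : ℝ), (0 : ℝ)) ∧ (∀ x ∈ A, a * x.1 + b * x.2 < c) ∧
    (∀ y ∈ B, c < a * y.1 + b * y.2)

/-- `P` avoids `K`: the line through any two distinct points of `P` is disjoint from `K`. -/
def Avoids (P : Finset Pt) (K : Set Pt) : Prop :=
  ∀ p ∈ P, ∀ q ∈ P, p ≠ q → ∀ x ∈ K, x ∉ affineSpan ℝ ({p, q} : Set Pt)

/-- `X` is an inner-cap with respect to `K`. -/
def InnerCap (K : Set Pt) (X : Finset Pt) : Prop :=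
  ∀ x ∈ X, SepLine {x} (convexHull ℝ (((X.erase x : Finset Pt) : Set Pt) ∪ K))

/-- `X` is an outer-cup with respect to `K`. -/
def OuterCup (K : Set Pt) (X : Finset Pt) : Prop :=
  ∀ x ∈ X, SepLine (convexHull ℝ ({x} ∪ K)) ((X.erase x : Finset Pt) : Set Pt)

/-- The line `L` crosses the cell `Δ`: it meets `Δ` but does not contain it. -/
def Crosses (L Δ : Set Pt) : Prop := (L ∩ Δ).Nonempty ∧ ¬ Δ ⊆ L

def cross (p q r : Pt) : ℝ := (q.2 - p.2) * (r.1 - p.1) - (r.2 - p.2) * (q.1 - p.1)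

def CupN (k : ℕ) (f : ℕ → Pt) : Prop :=
  (∀ i, i + 1 < k → (f i).1 < (f (i+1)).1) ∧
  ∀ i, i + 2 < k → cross (f i) (f (i+1)) (f (i+2)) < 0

def CapN (k : ℕ) (f : ℕ → Pt) : Prop :=
  (∀ i, i + 1 < k → (f i).1 < (f (i+1)).1) ∧
  ∀ i, i + 2 < k → 0 < cross (f i) (f (i+1)) (f (i+2))

lemma mono_of_consec {k : ℕ} {f : ℕ → Pt}
    (h : ∀ i, i + 1 < k → (f i).1 < (f (i+1)).1) :
    ∀ i j, i < j → j < k → (f i).1 < (f j).1 := by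
  intro i j hij hjk
  induction j with
  | zero => omega
  | succ j ih =>
    rcases Nat.lt_succ_iff_lt_or_eq.mp hij with h' | h'
    · exact lt_trans (ih h' (by omega)) (h j (by omega))
    · subst h'; exact h i (by omega)

lemma collinear_of_cross_eq_zero {p q r : Pt} (hpr : p.1 ≠ r.1)
    (h : cross p q r = 0) : Collinear ℝ ({p, q, r} : Set Pt) := by
  rw [collinear_iff_of_mem (Set.mem_insert p _)]
  refine ⟨r - p, ?_⟩
  have hr : r.1 - p.1 ≠ 0 := sub_ne_zero.mpr (Ne.symm hpr)
  unfold cross at h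
  rintro x (rfl | rfl | rfl)
  · exact ⟨0, by simp⟩
  · refine ⟨(x.1 - p.1) / (r.1 - p.1), ?_⟩
    have e1 : ((x.1 - p.1) / (r.1 - p.1)) * (r.1 - p.1) = x.1 - p.1 := by
      field_simp
    have e2 : ((x.1 - p.1) / (r.1 - p.1)) * (r.2 - p.2) = x.2 - p.2 := by
      rw [div_mul_eq_mul_div, div_eq_iff hr]; nlinarith [h]
    ext
    · simpa [Prod.smul_def] using by linarith [e1]
    · simpa [Prod.smul_def] using by linarith [e2]
  · exact ⟨1, by simp⟩

lemma cross_ne_zero {P : Finset Pt} (hX : DistinctX P) (hC : ¬ HasCollinear 3 P)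
    {p q r : Pt} (hp : p ∈ P) (hq : q ∈ P) (hr : r ∈ P)
    (h1 : p.1 < q.1) (h2 : q.1 < r.1) : cross p q r ≠ 0 := by
  intro h0
  have hpq : p ≠ q := fun h => by rw [h] at h1; exact lt_irrefl _ h1
  have hqr : q ≠ r := fun h => by rw [h] at h2; exact lt_irrefl _ h2
  have hpr : p ≠ r := fun h => by rw [h] at h1; exact lt_irrefl _ (h1.trans h2)
  apply hC
  refine ⟨{p, q, r}, ?_, ?_, ?_⟩
  · intro x hx; simp only [mem_insert, mem_singleton] at hx
    rcases hx with rfl | rfl | rfl <;> assumption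
  · rw [card_insert_of_notMem (by simp [hpq, hpr]),
      card_insert_of_notMem (by simp [hqr]), card_singleton]
  · have : (({p, q, r} : Finset Pt) : Set Pt) = ({p, q, r} : Set Pt) := by simp
    rw [this]
    exact collinear_of_cross_eq_zero (ne_of_lt (h1.trans h2)) h0

lemma exists_sorted (P : Finset Pt) (hX : DistinctX P) :
    ∃ f : ℕ → Pt, (∀ i < P.card, f i ∈ P) ∧
      ∀ i j, i < j → j < P.card → (f i).1 < (f j).1 := by
  classical
  have hcard : (P.image Prod.fst).card = P.card := card_image_of_injOn hX
  set g := (P.image Prod.fst).orderIsoOfFin hcard with hg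
  have hmem : ∀ i : Fin P.card, ∃ p ∈ P, p.1 = (g i : ℝ) := by
    intro i
    have : (g i : ℝ) ∈ P.image Prod.fst := (g i).2
    rw [mem_image] at this
    obtain ⟨p, hp, he⟩ := this
    exact ⟨p, hp, he⟩
  choose e heP hex using hmem
  refine ⟨fun i => if h : i < P.card then e ⟨i, h⟩ else (0,0), ?_, ?_⟩
  · intro i hi; simp only [dif_pos hi]; exact heP _
  · intro i j hij hj
    have hi : i < P.card := lt_trans hij hj
    simp only [dif_pos hi, dif_pos hj]
    rw [hex, hex]
    exact g.strictMono (Fin.mk_lt_mk.mpr hij)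
lemma hasCup_iff {k : ℕ} {P : Finset Pt} :
    HasCup k P ↔ ∃ f : ℕ → Pt, (∀ i < k, f i ∈ P) ∧ CupN k f := by
  constructor
  · rintro ⟨p, hpP, hmono, htri⟩
    refine ⟨fun i => if h : i < k then p ⟨i, h⟩ else (0,0),
      fun i hi => by simp only [dif_pos hi]; exact hpP _, ?_, ?_⟩
    · intro i hi
      simp only [dif_pos (show i < k by omega), dif_pos hi]
      exact hmono ⟨i, by omega⟩ ⟨i+1, hi⟩ (Fin.mk_lt_mk.mpr (by omega))
    · intro i hi
      simp only [dif_pos (show i < k by omega), dif_pos (show i+1 < k by omega), dif_pos hi]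
      have := htri i hi
      unfold cross
      linarith
  · rintro ⟨f, hfP, hc, ht⟩
    refine ⟨fun i => f i.1, fun i => hfP i.1 i.2, ?_, ?_⟩
    · intro i j hij
      exact mono_of_consec hc i.1 j.1 hij j.2
    · intro i hi
      have := ht i hi
      unfold cross at this
      simp only []
      linarith

lemma hasCap_iff {k : ℕ} {P : Finset Pt} :
    HasCap k P ↔ ∃ f : ℕ → Pt, (∀ i < k, f i ∈ P) ∧ CapN k f := by
  constructor
  · rintro ⟨p, hpP, hmono, htri⟩
    refine ⟨fun i => if h : i < k then p ⟨i, h⟩ else (0,0),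
      fun i hi => by simp only [dif_pos hi]; exact hpP _, ?_, ?_⟩
    · intro i hi
      simp only [dif_pos (show i < k by omega), dif_pos hi]
      exact hmono ⟨i, by omega⟩ ⟨i+1, hi⟩ (Fin.mk_lt_mk.mpr (by omega))
    · intro i hi
      simp only [dif_pos (show i < k by omega), dif_pos (show i+1 < k by omega), dif_pos hi]
      have := htri i hi
      unfold cross
      linarith
  · rintro ⟨f, hfP, hc, ht⟩
    refine ⟨fun i => f i.1, fun i => hfP i.1 i.2, ?_, ?_⟩
    · intro i j hij
      exact mono_of_consec hc i.1 j.1 hij j.2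
    · intro i hi
      have := ht i hi
      unfold cross at this
      simp only []
      linarith
lemma baseCap (P : Finset Pt) (hX : DistinctX P) (hC : ¬ HasCollinear 3 P)
    {k : ℕ} (hk : k ≤ P.card) :
    (∃ f, (∀ i < 3, f i ∈ P) ∧ CupN 3 f) ∨ (∃ f, (∀ i < k, f i ∈ P) ∧ CapN k f) := by
  obtain ⟨f, hfP, hmono⟩ := exists_sorted P hX
  by_cases h : ∃ i, i + 2 < k ∧ cross (f i) (f (i+1)) (f (i+2)) < 0
  · obtain ⟨i, hi, hc⟩ := h
    left
    refine ⟨fun j => f (i + j), fun j hj => hfP _ (by omega), ?_, ?_⟩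
    · intro j hj
      exact hmono (i+j) (i+(j+1)) (by omega) (by omega)
    · intro j hj
      have hj0 : j = 0 := by omega
      subst hj0
      simpa using hc
  · push_neg at h
    right
    refine ⟨f, fun i hi => hfP i (by omega), fun i hi => hmono i (i+1) (by omega) (by omega), ?_⟩
    intro i hi
    have hne := cross_ne_zero hX hC (hfP i (by omega)) (hfP (i+1) (by omega)) (hfP (i+2) (by omega))
      (hmono i (i+1) (by omega) (by omega)) (hmono (i+1) (i+2) (by omega) (by omega))
    rcases lt_or_gt_of_ne hne with hlt | hgt
    · linarith [h i hi]
    · exact hgt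

lemma baseCup (P : Finset Pt) (hX : DistinctX P) (hC : ¬ HasCollinear 3 P)
    {k : ℕ} (hk : k ≤ P.card) :
    (∃ f, (∀ i < k, f i ∈ P) ∧ CupN k f) ∨ (∃ f, (∀ i < 3, f i ∈ P) ∧ CapN 3 f) := by
  obtain ⟨f, hfP, hmono⟩ := exists_sorted P hX
  by_cases h : ∃ i, i + 2 < k ∧ 0 < cross (f i) (f (i+1)) (f (i+2))
  · obtain ⟨i, hi, hc⟩ := h
    right
    refine ⟨fun j => f (i + j), fun j hj => hfP _ (by omega), ?_, ?_⟩
    · intro j hj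
      exact hmono (i+j) (i+(j+1)) (by omega) (by omega)
    · intro j hj
      have hj0 : j = 0 := by omega
      subst hj0
      simpa using hc
  · push_neg at h
    left
    refine ⟨f, fun i hi => hfP i (by omega), fun i hi => hmono i (i+1) (by omega) (by omega), ?_⟩
    intro i hi
    have hne := cross_ne_zero hX hC (hfP i (by omega)) (hfP (i+1) (by omega)) (hfP (i+2) (by omega))
      (hmono i (i+1) (by omega) (by omega)) (hmono (i+1) (i+2) (by omega) (by omega))
    rcases lt_or_gt_of_ne hne with hlt | hgt
    · exact hlt
    · linarith [h i hi]

lemma cup_snoc {k : ℕ} {f : ℕ → Pt} (hk : 2 ≤ k) (hf : CupN k f) (z : Pt)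
    (hx : (f (k-1)).1 < z.1)
    (hc : cross (f (k-2)) (f (k-1)) z < 0) :
    CupN (k+1) (fun i => if i < k then f i else z) := by
  constructor
  · intro i hi
    rcases Nat.lt_or_ge (i+1) k with h1 | h1
    · simp only [if_pos (show i < k by omega), if_pos h1]
      exact hf.1 i h1
    · have hik : i = k - 1 := by omega
      simp only [if_pos (show i < k by omega), if_neg (show ¬ i + 1 < k by omega)]
      rw [hik]; exact hx
  · intro i hi
    rcases Nat.lt_or_ge (i+2) k with h1 | h1
    · simp only [if_pos (show i < k by omega), if_pos (show i+1 < k by omega), if_pos h1]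
      exact hf.2 i h1
    · have hik : i = k - 2 := by omega
      simp only [if_pos (show i < k by omega), if_pos (show i+1 < k by omega),
        if_neg (show ¬ i + 2 < k by omega)]
      rw [hik]
      have e : k - 2 + 1 = k - 1 := by omega
      rw [e]
      exact hc

lemma cap_cons {k : ℕ} {f : ℕ → Pt} (hk : 2 ≤ k) (hf : CapN k f) (z : Pt)
    (hx : z.1 < (f 0).1)
    (hc : 0 < cross z (f 0) (f 1)) :
    CapN (k+1) (fun i => if i = 0 then z else f (i-1)) := by
  constructor
  · intro i hi
    rcases Nat.eq_zero_or_pos i with h1 | h1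
    · subst h1
      simpa using hx
    · simp only [if_neg (show ¬ i = 0 by omega), if_neg (show ¬ i + 1 = 0 by omega)]
      have e : i + 1 - 1 = (i - 1) + 1 := by omega
      rw [e]
      exact hf.1 (i-1) (by omega)
  · intro i hi
    rcases Nat.eq_zero_or_pos i with h1 | h1
    · subst h1
      simpa using hc
    · simp only [if_neg (show ¬ i = 0 by omega), if_neg (show ¬ i + 1 = 0 by omega),
        if_neg (show ¬ i + 2 = 0 by omega)]
      have e1 : i + 1 - 1 = (i - 1) + 1 := by omega
      have e2 : i + 2 - 1 = (i - 1) + 2 := by omega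
      rw [e1, e2]
      exact hf.2 (i-1) (by omega)

lemma hasCollinear_mono {P Q : Finset Pt} (h : Q ⊆ P) (hC : ¬ HasCollinear 3 P) :
    ¬ HasCollinear 3 Q := fun ⟨S, hS, hc, hl⟩ => hC ⟨S, hS.trans h, hc, hl⟩

lemma distinctX_mono {P Q : Finset Pt} (h : Q ⊆ P) (hX : DistinctX P) : DistinctX Q :=
  Set.InjOn.mono (by exact_mod_cast h) hX
lemma hasCup_mono {k : ℕ} {P Q : Finset Pt} (h : Q ⊆ P) : HasCup k Q → HasCup k P :=
  fun ⟨p, hp, hs⟩ => ⟨p, fun i => h (hp i), hs⟩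
lemma hasCap_mono {k : ℕ} {P Q : Finset Pt} (h : Q ⊆ P) : HasCap k Q → HasCap k P :=
  fun ⟨p, hp, hs⟩ => ⟨p, fun i => h (hp i), hs⟩

lemma main : ∀ N m n : ℕ, m + n ≤ N → 3 ≤ m → 3 ≤ n → ∀ P : Finset Pt,
    DistinctX P → ¬ HasCollinear 3 P →
    (m + n - 4).choose (n - 2) + 1 ≤ P.card →
    HasCup m P ∨ HasCap n P := by
  intro N
  induction N with
  | zero => intro m n h; omega
  | succ N ih =>
    intro m n hN hm hn P hX hC hcard
    rcases eq_or_lt_of_le hm with hm3 | hm4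
    · -- m = 3
      have hm3 : m = 3 := hm3.symm
      subst hm3
      have hkn : n ≤ P.card := by
        have h1 : (3 + n - 4).choose (n - 2) = n - 1 := by
          have e1 : 3 + n - 4 = n - 1 := by omega
          have e2 : n - 2 = (n - 1) - 1 := by omega
          rw [e1, e2, Nat.choose_symm (by omega), Nat.choose_one_right]
        omega
      rcases baseCap P hX hC hkn with ⟨f, h1, h2⟩ | ⟨f, h1, h2⟩
      · exact Or.inl (hasCup_iff.mpr ⟨f, h1, h2⟩)
      · exact Or.inr (hasCap_iff.mpr ⟨f, h1, h2⟩)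
    rcases eq_or_lt_of_le hn with hn3 | hn4
    · -- n = 3
      have hn3 : n = 3 := hn3.symm
      subst hn3
      have hkm : m ≤ P.card := by
        have h1 : (m + 3 - 4).choose 1 = m - 1 := by
          have e1 : m + 3 - 4 = m - 1 := by omega
          rw [e1, Nat.choose_one_right]
        have e2 : (3 : ℕ) - 2 = 1 := by norm_num
        rw [e2, h1] at hcard
        omega
      rcases baseCup P hX hC hkm with ⟨f, h1, h2⟩ | ⟨f, h1, h2⟩
      · exact Or.inl (hasCup_iff.mpr ⟨f, h1, h2⟩)
      · exact Or.inr (hasCap_iff.mpr ⟨f, h1, h2⟩)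
    -- m ≥ 4, n ≥ 4
    classical
    set T := P.filter (fun q => ∃ f : ℕ → Pt,
      (∀ i < m - 1, f i ∈ P) ∧ CupN (m-1) f ∧ f (m-2) = q) with hT
    have hTP : T ⊆ P := filter_subset _ _
    by_cases hsplit : (m - 1 + n - 4).choose (n - 2) + 1 ≤ (P \ T).card
    · rcases ih (m-1) n (by omega) (by omega) hn (P \ T)
        (distinctX_mono (sdiff_subset) hX) (hasCollinear_mono (sdiff_subset) hC) hsplit
        with hcup | hcap
      · exfalso
        rw [hasCup_iff] at hcup
        obtain ⟨f, hfP, hf⟩ := hcup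
        have hmem : f (m-2) ∈ P \ T := hfP (m-2) (by omega)
        rw [mem_sdiff] at hmem
        apply hmem.2
        rw [hT, mem_filter]
        exact ⟨hmem.1, f, fun i hi => (mem_sdiff.mp (hfP i hi)).1, hf, rfl⟩
      · exact Or.inr (hasCap_mono sdiff_subset hcap)
    · have hTcard : (m + (n-1) - 4).choose ((n-1) - 2) + 1 ≤ T.card := by
        have h1 : (P \ T).card = P.card - T.card := card_sdiff_of_subset hTP
        have h2 : T.card ≤ P.card := card_le_card hTP
        have pascal : (m + n - 4).choose (n - 2)
            = (m + n - 5).choose (n - 3) + (m + n - 5).choose (n - 2) := by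
          have e1 : m + n - 4 = (m + n - 5) + 1 := by omega
          have e2 : n - 2 = (n - 3) + 1 := by omega
          rw [e1, e2, Nat.choose_succ_succ]
        have e3 : m - 1 + n - 4 = m + n - 5 := by omega
        have e4 : m + (n-1) - 4 = m + n - 5 := by omega
        have e5 : (n-1) - 2 = n - 3 := by omega
        rw [e3] at hsplit
        rw [e4, e5]
        omega
      rcases ih m (n-1) (by omega) hm (by omega) T
        (distinctX_mono hTP hX) (hasCollinear_mono hTP hC) hTcard with hcup | hcap
      · exact Or.inl (hasCup_mono hTP hcup)
      · rw [hasCap_iff] at hcap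
        obtain ⟨c, hcT, hcap⟩ := hcap
        have hc0 : c 0 ∈ T := hcT 0 (by omega)
        rw [hT, mem_filter] at hc0
        obtain ⟨-, f, hfP, hf, hlast⟩ := hc0
        have hx1 : (f (m-3)).1 < (f (m-2)).1 := by
          have := hf.1 (m-3) (by omega)
          have e : m - 3 + 1 = m - 2 := by omega
          rwa [e] at this
        have hx2 : (f (m-2)).1 < (c 1).1 := by
          rw [hlast]; exact hcap.1 0 (by omega)
        have hmemf3 : f (m-3) ∈ P := hfP _ (by omega)
        have hmemf2 : f (m-2) ∈ P := hfP _ (by omega)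
        have hmemc1 : c 1 ∈ P := hTP (hcT 1 (by omega))
        have hne := cross_ne_zero hX hC hmemf3 hmemf2 hmemc1 hx1 hx2
        rcases lt_or_gt_of_ne hne with hlt | hgt
        · -- extend cup
          left
          rw [hasCup_iff]
          refine ⟨fun i => if i < m-1 then f i else c 1, ?_, ?_⟩
          · intro i hi
            by_cases h : i < m-1
            · simp only [if_pos h]; exact hfP i h
            · simp only [if_neg h]; exact hmemc1
          · have key := cup_snoc (k := m-1) (by omega) hf (c 1) ?_ ?_
            · have e : m - 1 + 1 = m := by omega
              rwa [e] at key
            · have e : m - 1 - 1 = m - 2 := by omega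
              rwa [e]
            · have e1 : m - 1 - 2 = m - 3 := by omega
              have e2 : m - 1 - 1 = m - 2 := by omega
              rwa [e1, e2]
        · -- prepend to cap
          right
          rw [hasCap_iff]
          refine ⟨fun i => if i = 0 then f (m-3) else c (i-1), ?_, ?_⟩
          · intro i hi
            by_cases h : i = 0
            · simp only [if_pos h]; exact hmemf3
            · simp only [if_neg h]; exact hTP (hcT (i-1) (by omega))
          · have key := cap_cons (k := n-1) (by omega) hcap (f (m-3)) ?_ ?_
            · have e : n - 1 + 1 = n := by omega
              rwa [e] at key
            · rw [← hlast]; exact hx1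
            · rw [← hlast]; exact hgt

/-- **Erdős–Szekeres cups–caps theorem.** For all `m, n ≥ 3`, every finite planar point set
with pairwise distinct x-coordinates, no 3 collinear points and at least
`binom(m+n−4, n−2) + 1` points contains an `m`-cup or an `n`-cap. -/
theorem stmt12 :
    ∀ m n : ℕ, 3 ≤ m → 3 ≤ n → ∀ P : Finset Pt,
      DistinctX P → ¬ HasCollinear 3 P →
      (m + n - 4).choose (n - 2) + 1 ≤ P.card →
      HasCup m P ∨ HasCap n P := by
  intro m n hm hn P hX hC hc
  exact main (m + n) m n le_rfl hm hn P hX hC hc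

end
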